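/- Closed form of compatibility: Let $f \in L^2(P_\mathcal{X})$ have expansion $\tilde f = \sum_{i \ge 1} u_i \mu_i$ in the left singular functions of $T_{P^+}$ (where $\tilde f = f - \mathbb{E}[f]$). Then the compatibility $\rho(f, P^+) = \max_{g \ne 0} \frac{\langle \tilde f, T_{P^+} g \rangle_{P_\mathcal{X}}}{\|\tilde f\|_{P_\mathcal{X}} \|g\|_{P_\mathcal{A}}}$ equals $\sqrt{\frac{\sum_{i \ge 1} s_i^2 u_i^2}{\sum_{i \ge 1} u_i^2}}$. -/

import Mathlib

open scoped InnerProductSpace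

-- helper: inner products of a HasSum expansion over an orthonormal family shifted by one
lemma inner_hasSum_shift {H : Type*} [NormedAddCommGroup H] [InnerProductSpace ℝ H]
    (v : ℕ → H) (hv : Orthonormal ℝ v) (c : ℕ → ℝ) (x : H)
    (hx : HasSum (fun i => c i • v (i + 1)) x) (j : ℕ) :
    ⟪v (j + 1), x⟫_ℝ = c j := by
  have h := hx.mapL (innerSL ℝ (v (j + 1)))
  have heq : (fun i => (innerSL ℝ (v (j+1))) (c i • v (i+1)))
      = fun i => if i = j then c j else 0 := by
    funext i
    simp only [innerSL_apply_apply, inner_smul_right]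
    rcases eq_or_ne i j with rfl | hij
    · simp [hv.1 (i+1), real_inner_self_eq_norm_sq]
    · simp [hv.2 (show (j:ℕ)+1 ≠ i+1 by omega), hij]
  rw [heq] at h
  exact ((hasSum_ite_eq j (c j)).unique h).symm

theorem stmt3 {HA HX : Type*}
    [NormedAddCommGroup HA] [InnerProductSpace ℝ HA] [CompleteSpace HA]
    [NormedAddCommGroup HX] [InnerProductSpace ℝ HX] [CompleteSpace HX]
    (T : HA →L[ℝ] HX)
    (s : ℕ → ℝ) (hs : ∀ i, 0 ≤ s i)
    (μ : ℕ → HX) (ν : ℕ → HA) (hμ : Orthonormal ℝ μ) (hν : Orthonormal ℝ ν)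
    (hT : ∀ i, T (ν i) = s i • μ i)
    (hadj : ∀ (g : HA) (i : ℕ), ⟪μ i, T g⟫_ℝ = s i * ⟪ν i, g⟫_ℝ)
    (hνbasis : ∀ g : HA, HasSum (fun i => ⟪ν i, g⟫_ℝ • ν i) g)
    (u : ℕ → ℝ) (hu : Summable fun i => (u i) ^ 2)
    (f : HX) (hf : HasSum (fun i => u i • μ (i + 1)) f) (hfne : f ≠ 0) :
    IsGreatest { r : ℝ | ∃ g : HA, g ≠ 0 ∧ r = ⟪f, T g⟫_ℝ / (‖f‖ * ‖g‖) }
      (Real.sqrt ((∑' i, (s (i + 1)) ^ 2 * (u i) ^ 2) / ∑' i, (u i) ^ 2)) := by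
  set a : ℕ → ℝ := fun i => s (i + 1) * u i with ha
  -- s is bounded by ‖T‖
  have hsb : ∀ i, s i ≤ ‖T‖ := by
    intro i
    have h1 : ‖T (ν i)‖ = s i := by
      rw [hT i, norm_smul, hμ.1 i, Real.norm_eq_abs, abs_of_nonneg (hs i)]; ring
    have h2 := T.le_opNorm (ν i)
    rwa [h1, hν.1 i, mul_one] at h2
  -- summability of a²
  have hasum : Summable fun i => (a i) ^ 2 := by
    apply Summable.of_nonneg_of_le (fun i => sq_nonneg _) _ (hu.mul_left (‖T‖^2))
    intro i
    have : (a i)^2 = (s (i+1))^2 * (u i)^2 := by rw [ha]; ring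
    rw [this]
    exact mul_le_mul_of_nonneg_right (pow_le_pow_left₀ (hs _) (hsb _) 2) (sq_nonneg _)
  -- existence of g₀
  obtain ⟨g₀, hg₀⟩ : ∃ g₀ : HA, HasSum (fun i => a i • ν (i + 1)) g₀ := by
    have hν' : Orthonormal ℝ (fun i : ℕ => ν (i + 1)) :=
      hν.comp _ (fun x y h => by omega)
    have := (hν'.orthogonalFamily.summable_iff_norm_sq_summable a).2 (by
      convert hasum using 2 with i
      rw [Real.norm_eq_abs, sq_abs])
    exact ⟨_, (by simpa [LinearIsometry.toSpanSingleton_apply] using this : Summable fun i => a i • ν (i + 1)).hasSum⟩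
  -- key : ⟪f, T g⟫ = ⟪g₀, g⟫ for all g
  have hkey : ∀ g : HA, ⟪f, T g⟫_ℝ = ⟪g₀, g⟫_ℝ := by
    intro g
    have h1 := hf.mapL (innerSL ℝ (T g))
    have h2 := hg₀.mapL (innerSL ℝ g)
    have e1 : (fun i => (innerSL ℝ (T g)) (u i • μ (i+1)))
        = fun i => a i * ⟪ν (i+1), g⟫_ℝ := by
      funext i
      simp only [innerSL_apply_apply, inner_smul_right]
      rw [real_inner_comm, hadj, ha]; ring
    have e2 : (fun i => (innerSL ℝ g) (a i • ν (i+1)))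
        = fun i => a i * ⟪ν (i+1), g⟫_ℝ := by
      funext i
      simp only [innerSL_apply_apply, inner_smul_right]
      rw [real_inner_comm]
    rw [e1] at h1; rw [e2] at h2
    have h3 : ⟪T g, f⟫_ℝ = ⟪g, g₀⟫_ℝ := h1.unique h2
    calc ⟪f, T g⟫_ℝ = ⟪T g, f⟫_ℝ := real_inner_comm _ _
      _ = ⟪g, g₀⟫_ℝ := h3
      _ = ⟪g₀, g⟫_ℝ := real_inner_comm _ _
  -- norms squared
  have hfn2 : ⟪f, f⟫_ℝ = ∑' i, (u i)^2 := by
    have h := hf.mapL (innerSL ℝ f)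
    have e : (fun i => (innerSL ℝ f) (u i • μ (i+1))) = fun i => (u i)^2 := by
      funext i
      simp only [innerSL_apply_apply, inner_smul_right]
      rw [real_inner_comm, inner_hasSum_shift μ hμ u f hf i]; ring
    rw [e] at h
    exact h.tsum_eq.symm
  have hgn2 : ⟪g₀, g₀⟫_ℝ = ∑' i, (a i)^2 := by
    have h := hg₀.mapL (innerSL ℝ g₀)
    have e : (fun i => (innerSL ℝ g₀) (a i • ν (i+1))) = fun i => (a i)^2 := by
      funext i
      simp only [innerSL_apply_apply, inner_smul_right]
      rw [real_inner_comm,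
        inner_hasSum_shift ν hν a g₀ hg₀ i]; ring
    rw [e] at h
    exact h.tsum_eq.symm
  have hS : (∑' i, (s (i + 1)) ^ 2 * (u i) ^ 2) = ∑' i, (a i)^2 := by
    congr 1; funext i; rw [ha]; ring
  have hfnorm : ‖f‖ = Real.sqrt (∑' i, (u i)^2) := by
    rw [← hfn2, real_inner_self_eq_norm_sq, Real.sqrt_sq (norm_nonneg f)]
  have hgnorm : ‖g₀‖ = Real.sqrt (∑' i, (a i)^2) := by
    rw [← hgn2, real_inner_self_eq_norm_sq, Real.sqrt_sq (norm_nonneg g₀)]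
  have hfpos : 0 < ‖f‖ := norm_pos_iff.2 hfne
  have hUpos : 0 < ∑' i, (u i)^2 := by
    have := hfnorm ▸ hfpos
    nlinarith [Real.sq_sqrt (tsum_nonneg (fun i => sq_nonneg (u i)) : (0:ℝ) ≤ ∑' i, (u i)^2), this]
  have htarget : Real.sqrt ((∑' i, (s (i + 1)) ^ 2 * (u i) ^ 2) / ∑' i, (u i) ^ 2)
      = ‖g₀‖ / ‖f‖ := by
    rw [hS, hgnorm, hfnorm,
      Real.sqrt_div (tsum_nonneg fun i => sq_nonneg (a i))]
  rw [htarget]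
  constructor
  · -- membership: attained
    rcases eq_or_ne g₀ 0 with h0 | h0
    · refine ⟨ν 0, ?_, ?_⟩
      · intro h
        have := hν.1 0
        rw [h, norm_zero] at this
        norm_num at this
      · rw [hkey, h0, inner_zero_left, norm_zero, zero_div]
        simp
    · refine ⟨g₀, h0, ?_⟩
      rw [hkey, real_inner_self_eq_norm_sq]
      have hg₀pos : 0 < ‖g₀‖ := norm_pos_iff.2 h0
      field_simp
  · -- upper bound
    rintro r ⟨g, hg, rfl⟩
    have hgpos : 0 < ‖g‖ := norm_pos_iff.2 hg
    rw [hkey]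
    rw [div_le_div_iff₀ (by positivity) hfpos]
    calc ⟪g₀, g⟫_ℝ * ‖f‖ ≤ ‖g₀‖ * ‖g‖ * ‖f‖ :=
          mul_le_mul_of_nonneg_right (real_inner_le_norm g₀ g) (norm_nonneg f)
      _ = ‖g₀‖ * (‖f‖ * ‖g‖) := by ring
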